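/- Let G be a finitely generated group, with word length |·|_G and balls B_G(r) = {g ∈ G : |g|_G ≤ r} relative to a finite symmetric generating set. If G has super-linear growth, i.e. |B_G(n)|/n → ∞ as n → ∞, then its growth is at least quadratic: there is a constant c_1 > 0 such that |B_G(r)| ≥ c_1 r^2 for all real r ≥ 1. -/

import Mathlib

open Filter

open Classical

/-- The word length of `g` with respect to the generating set `S`. -/
noncomputable def wordLength {G : Type*} [Group G] (S : Set G) (g : G) : ℕ :=
  sInf {n | ∃ l : List G, l.length = n ∧ (∀ s ∈ l, s ∈ S) ∧ l.prod = g}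

/-- The ball `B_G(r) = {g : |g|_G ≤ r}`. -/
def wordBall {G : Type*} [Group G] (S : Set G) (r : ℝ) : Set G :=
  {g : G | (wordLength S g : ℝ) ≤ r}

section WL
variable {G : Type*} [Group G] (S : Set G)

def IsWord (S : Set G) (l : List G) : Prop := ∀ x ∈ l, x ∈ S

variable {S}

lemma exists_word (hSsym : ∀ s ∈ S, s⁻¹ ∈ S) (hSgen : Subgroup.closure S = ⊤) (g : G) :
    ∃ l : List G, IsWord S l ∧ l.prod = g := by
  have hg : g ∈ Subgroup.closure S := by rw [hSgen]; trivial
  induction hg using Subgroup.closure_induction with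
  | mem x hx =>
      refine ⟨[x], ?_, by simp⟩
      intro y hy
      simp only [List.mem_singleton] at hy
      exact hy ▸ hx
  | one => exact ⟨[], by intro y hy; simp at hy, by simp⟩
  | mul x y _ _ hx hy =>
      obtain ⟨l1, hl1, hp1⟩ := hx
      obtain ⟨l2, hl2, hp2⟩ := hy
      refine ⟨l1 ++ l2, ?_, by simp [hp1, hp2]⟩
      intro z hz
      rcases List.mem_append.1 hz with h | h
      · exact hl1 z h
      · exact hl2 z h
  | inv x _ hx =>
      obtain ⟨l, hl, hp⟩ := hx
      refine ⟨(l.map (·⁻¹)).reverse, ?_, ?_⟩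
      · intro z hz
        simp only [List.mem_reverse, List.mem_map] at hz
        obtain ⟨a, ha, rfl⟩ := hz
        exact hSsym a (hl a ha)
      · rw [← hp, ← List.prod_inv_reverse]

lemma wordLength_le (g : G) {l : List G} (hl : IsWord S l) (hp : l.prod = g) :
    wordLength S g ≤ l.length :=
  Nat.sInf_le ⟨l, rfl, hl, hp⟩

lemma exists_geodesic (hSsym : ∀ s ∈ S, s⁻¹ ∈ S) (hSgen : Subgroup.closure S = ⊤) (g : G) :
    ∃ l : List G, IsWord S l ∧ l.prod = g ∧ l.length = wordLength S g := by
  have hne : {n | ∃ l : List G, l.length = n ∧ (∀ s ∈ l, s ∈ S) ∧ l.prod = g}.Nonempty := by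
    obtain ⟨l, hl, hp⟩ := exists_word hSsym hSgen g
    exact ⟨l.length, l, rfl, hl, hp⟩
  obtain ⟨l, hlen, hl, hp⟩ := Nat.sInf_mem hne
  exact ⟨l, hl, hp, hlen⟩

lemma wordLength_one : wordLength S (1 : G) = 0 :=
  Nat.le_zero.1 (wordLength_le 1 (l := []) (fun x hx => by simp at hx) (by simp))

lemma wordLength_eq_zero (hSsym : ∀ s ∈ S, s⁻¹ ∈ S) (hSgen : Subgroup.closure S = ⊤) {g : G}
    (h : wordLength S g = 0) : g = 1 := by
  obtain ⟨l, _, hp, hlen⟩ := exists_geodesic hSsym hSgen g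
  rw [h] at hlen
  rw [← hp, List.length_eq_zero_iff.1 hlen]; simp

lemma wordLength_mul_le (hSsym : ∀ s ∈ S, s⁻¹ ∈ S) (hSgen : Subgroup.closure S = ⊤) (a b : G) :
    wordLength S (a * b) ≤ wordLength S a + wordLength S b := by
  obtain ⟨l1, h1, p1, len1⟩ := exists_geodesic hSsym hSgen a
  obtain ⟨l2, h2, p2, len2⟩ := exists_geodesic hSsym hSgen b
  have hw : IsWord S (l1 ++ l2) := by
    intro z hz
    rcases List.mem_append.1 hz with h | h
    · exact h1 z h
    · exact h2 z h
  calc wordLength S (a * b) ≤ (l1 ++ l2).length :=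
        wordLength_le _ hw (by simp [p1, p2])
    _ = _ := by simp [len1, len2]

omit [Group G] in
/-- Finiteness of sets of words of bounded length. -/
lemma finite_words (hSfin : S.Finite) (n : ℕ) :
    {l : List G | l.length ≤ n ∧ IsWord S l}.Finite := by
  induction n with
  | zero =>
      apply Set.Finite.subset (Set.finite_singleton ([] : List G))
      rintro l ⟨hlen, -⟩
      simp [List.length_eq_zero_iff.1 (Nat.le_zero.1 hlen)]
  | succ n ih =>
      apply Set.Finite.subset ((Set.Finite.image2 List.cons hSfin ih).union
        (Set.finite_singleton ([] : List G)))
      rintro l ⟨hlen, hword⟩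
      match l with
      | [] => exact Or.inr rfl
      | a :: t =>
          refine Or.inl (Set.mem_image2_of_mem (hword a (by simp)) ?_)
          exact ⟨by simpa using Nat.succ_le_succ_iff.1 hlen, fun x hx => hword x (by simp [hx])⟩

lemma ball_subset_prods (hSsym : ∀ s ∈ S, s⁻¹ ∈ S) (hSgen : Subgroup.closure S = ⊤) (n : ℕ) :
    {g : G | wordLength S g ≤ n} ⊆ List.prod '' {l : List G | l.length ≤ n ∧ IsWord S l} := by
  intro g hg
  obtain ⟨l, hl, hp, hlen⟩ := exists_geodesic hSsym hSgen g
  exact ⟨l, ⟨hlen ▸ hg, hl⟩, hp⟩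

lemma finite_ball (hSfin : S.Finite) (hSsym : ∀ s ∈ S, s⁻¹ ∈ S)
    (hSgen : Subgroup.closure S = ⊤) (n : ℕ) :
    {g : G | wordLength S g ≤ n}.Finite :=
  Set.Finite.subset ((finite_words hSfin n).image _) (ball_subset_prods hSsym hSgen n)

lemma finite_wordBall (hSfin : S.Finite) (hSsym : ∀ s ∈ S, s⁻¹ ∈ S)
    (hSgen : Subgroup.closure S = ⊤) (r : ℝ) : (wordBall S r).Finite := by
  apply Set.Finite.subset (finite_ball hSfin hSsym hSgen ⌊r⌋₊)
  intro g hg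
  simp only [wordBall, Set.mem_setOf_eq] at hg ⊢
  exact Nat.le_floor hg

end WL



section FMH
variable {α : Type*}

/-- The factor of `w` of length `m` starting at position `s`. -/
def fac (w : List α) (s m : ℕ) : List α := (w.drop s).take m

/-- The set of length-`m` factors of `w`. -/
def FacSet (w : List α) (m : ℕ) : Set (List α) :=
  (fun s => fac w s m) '' {s | s + m ≤ w.length}

lemma facset_finite (w : List α) (m : ℕ) : (FacSet w m).Finite :=
  Set.Finite.image _ (Set.finite_Iic w.length |>.subset (fun s hs => le_trans (Nat.le_add_right _ _) hs))

lemma mem_facset {w : List α} {s m : ℕ} (h : s + m ≤ w.length) : fac w s m ∈ FacSet w m :=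
  ⟨s, h, rfl⟩

lemma length_fac {w : List α} {s m : ℕ} (h : s + m ≤ w.length) : (fac w s m).length = m := by
  simp only [fac, List.length_take, List.length_drop]
  omega

lemma facset_zero (w : List α) : FacSet w 0 = {[]} := by
  ext f
  constructor
  · rintro ⟨s, hs, rfl⟩
    simp [fac]
  · rintro rfl
    exact ⟨0, by simp, by simp [fac]⟩

lemma fac_succ {w : List α} {s m : ℕ} (h : s + m < w.length) :
    fac w s (m + 1) = fac w s m ++ [w[s + m]'h] := by
  have hm : m < (w.drop s).length := by simp [List.length_drop]; omega
  have := List.take_concat_get hm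
  simp only [fac]
  rw [← this]
  simp [List.getElem_drop]

lemma fac_take {w : List α} {s m : ℕ} :
    (fac w s (m + 1)).take m = fac w s m := by
  simp [fac, List.take_take]

lemma fac_shift {w : List α} (s m : ℕ) :
    fac w (s + 1) m = (fac w s (m + 1)).drop 1 := by
  simp only [fac]
  rw [List.drop_take, List.drop_drop]
  norm_num

/-- complexity -/
noncomputable def cplx (w : List α) (m : ℕ) : ℕ := (FacSet w m).ncard

lemma cplx_zero (w : List α) : cplx w 0 = 1 := by
  simp [cplx, facset_zero]

lemma cplx_le_succ (w : List α) (m : ℕ) : cplx w m ≤ cplx w (m + 1) + 1 := by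
  have hsub : FacSet w m ⊆ insert (fac w (w.length - m) m) (List.take m '' FacSet w (m + 1)) := by
    rintro f ⟨s, hs, rfl⟩
    rcases Nat.lt_or_ge (s + m) w.length with hlt | hge
    · right
      refine ⟨fac w s (m + 1), mem_facset (by omega), fac_take⟩
    · left
      have : s = w.length - m := by simp only [Set.mem_setOf_eq] at hs; omega
      rw [this]
  calc cplx w m ≤ (insert (fac w (w.length - m) m) (List.take m '' FacSet w (m + 1))).ncard :=
        Set.ncard_le_ncard hsub (Set.Finite.insert _ ((facset_finite w (m+1)).image _))
    _ ≤ (List.take m '' FacSet w (m + 1)).ncard + 1 := Set.ncard_insert_le _ _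
    _ ≤ cplx w (m + 1) + 1 := by
        have h1 := Set.ncard_image_le (f := List.take m) (s := FacSet w (m+1)) (facset_finite w (m+1))
        have h2 : cplx w (m+1) = (FacSet w (m+1)).ncard := rfl
        omega

lemma cplx_chain (w : List α) (k : ℕ) : ∀ d m, m + d = k → cplx w m ≤ cplx w k + d := by
  intro d
  induction d with
  | zero => intro m hm; simp [show m = k by omega]
  | succ d ih =>
      intro m hm
      calc cplx w m ≤ cplx w (m + 1) + 1 := cplx_le_succ w m
        _ ≤ (cplx w k + d) + 1 := by have := ih (m+1) (by omega); omega
        _ = cplx w k + (d + 1) := by omega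

end FMH

section FMH3
variable {α : Type*}

noncomputable def Phi (w : List α) (k : ℕ) : ℕ := ∑ m ∈ Finset.Icc 1 k, cplx w m

lemma length_mem_facset {w : List α} {m : ℕ} {f : List α} (hf : f ∈ FacSet w m) :
    f.length = m := by
  obtain ⟨s, hs, rfl⟩ := hf
  exact length_fac hs

lemma phi_le_of_budget {w : List α} {k : ℕ} (hbud : cplx w k ≤ k) : Phi w k ≤ 2 * k * k := by
  have h : ∀ m ∈ Finset.Icc 1 k, cplx w m ≤ 2 * k := by
    intro m hm
    simp only [Finset.mem_Icc] at hm
    have := cplx_chain w k (k - m) m (by omega)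
    omega
  calc Phi w k ≤ (Finset.Icc 1 k).card • (2 * k) := Finset.sum_le_card_nsmul _ _ _ h
    _ ≤ 2 * k * k := by simp [Nat.card_Icc]; ring_nf; omega

/-- Main finite Morse–Hedlund-type lemma. -/
lemma fmh_main (k : ℕ) (hk : 1 ≤ k) :
    ∀ n (w : List α), w.length = n → cplx w k ≤ k →
    ∃ i₀ P j₀, i₀ ≤ 3 * k ∧ 1 ≤ P ∧ P ≤ 2 * k ∧ j₀ ≤ Phi w k ∧
      ∀ s, i₀ ≤ s → s + P + j₀ < w.length → w[s]? = w[s + P]? := by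
  intro n
  induction n using Nat.strong_induction_on with
  | _ n IH =>
    intro w hwlen hbud
    by_cases hsmall : n ≤ 3 * k
    · refine ⟨3 * k, k, 0, le_rfl, hk, by omega, Nat.zero_le _, fun s hs hcond => ?_⟩
      omega
    · push_neg at hsmall
      subst hwlen
      -- pigeonhole level
      have hlevel : ∃ m, m < k ∧ cplx w (m + 1) ≤ cplx w m := by
        by_contra h
        push_neg at h
        have hmono : ∀ m, m ≤ k → m + 1 ≤ cplx w m := by
          intro m
          induction m with
          | zero => intro _; simp [cplx_zero]
          | succ m ih =>
              intro hm
              have h1 := ih (by omega)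
              have h2 := h m (by omega)
              omega
        have := hmono k le_rfl
        omega
      obtain ⟨m, hmk, hcard⟩ := hlevel
      have hpm : cplx w m ≤ 2 * k := by
        have := cplx_chain w k (k - m) m (by omega)
        omega
      by_cases hext : ∀ f ∈ FacSet w m, ∃ a, f ++ [a] ∈ FacSet w (m + 1)
      · -- deterministic case
        -- uniqueness of extensions
        have huniq : ∀ f ∈ FacSet w m, ∀ a b, f ++ [a] ∈ FacSet w (m + 1) →
            f ++ [b] ∈ FacSet w (m + 1) → a = b := by
          intro f hf a b ha hb
          have hAfin := facset_finite w m
          have hBfin := facset_finite w (m + 1)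
          have hinj := Finset.inj_on_of_surj_on_of_card_le
            (s := hBfin.toFinset) (t := hAfin.toFinset)
            (fun x _ => x.take m)
            (by
              intro x hx
              simp only [Set.Finite.mem_toFinset] at hx ⊢
              obtain ⟨s, hs, rfl⟩ := hx
              simp only [Set.mem_setOf_eq] at hs
              dsimp only
              rw [fac_take]
              exact mem_facset (by omega))
            (by
              intro x hx
              simp only [Set.Finite.mem_toFinset] at hx
              obtain ⟨a, hxa⟩ := hext x hx
              refine ⟨x ++ [a], by simp only [Set.Finite.mem_toFinset]; exact hxa, ?_⟩
              exact List.take_left' (length_mem_facset hx))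
            (by
              rw [← Set.ncard_eq_toFinset_card _ hBfin, ← Set.ncard_eq_toFinset_card _ hAfin]
              exact hcard)
          have h1 : (f ++ [a]).take m = (f ++ [b]).take m := by
            rw [List.take_left' (length_mem_facset hf), List.take_left' (length_mem_facset hf)]
          have := hinj (by simp only [Set.Finite.mem_toFinset]; exact ha)
            (by simp only [Set.Finite.mem_toFinset]; exact hb) h1
          have := List.append_cancel_left this
          simpa using this
        -- determinism of letters
        have hdet : ∀ s t (hs : s + m < w.length) (ht : t + m < w.length),
            fac w s m = fac w t m → w[s + m]'hs = w[t + m]'ht := by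
          intro s t hs ht hfac
          apply huniq (fac w s m) (mem_facset (le_of_lt hs))
          · rw [← fac_succ hs]; exact mem_facset (by omega)
          · rw [hfac, ← fac_succ ht]; exact mem_facset (by omega)
        -- pigeonhole on positions
        have hA := facset_finite w m
        have hmaps : ∀ s ∈ Finset.range (cplx w m + 1), fac w s m ∈ hA.toFinset := by
          intro s hs
          simp only [Finset.mem_range] at hs
          simp only [Set.Finite.mem_toFinset]
          exact mem_facset (by omega)
        obtain ⟨i, hi, j, hj, hne, heq⟩ := Finset.exists_ne_map_eq_of_card_lt_of_maps_to
          (by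
            rw [← Set.ncard_eq_toFinset_card _ hA, Finset.card_range]
            have hc : cplx w m = (FacSet w m).ncard := rfl
            omega) hmaps
        simp only [Finset.mem_range] at hi hj
        -- wlog i < j
        have hcore : ∀ i j, i < j → j ≤ cplx w m → fac w i m = fac w j m →
            ∃ i₀ P j₀, i₀ ≤ 3 * k ∧ 1 ≤ P ∧ P ≤ 2 * k ∧ j₀ ≤ Phi w k ∧
              ∀ s, i₀ ≤ s → s + P + j₀ < w.length → w[s]? = w[s + P]? := by
          clear hne heq hi hj
          intro i j hij hjle heq
          -- window propagation
          have hwin : ∀ t, j + t + m ≤ w.length → fac w (i + t) m = fac w (j + t) m := by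
            intro t
            induction t with
            | zero => intro _; simpa using heq
            | succ t ih =>
                intro hbound
                have hbj : j + t + m < w.length := by omega
                have hbi : i + t + m < w.length := by omega
                have hw := ih (by omega)
                have hlet : w[i + t + m]'hbi = w[j + t + m]'hbj := hdet _ _ hbi hbj hw
                have e1 : i + (t + 1) = (i + t) + 1 := by omega
                have e2 : j + (t + 1) = (j + t) + 1 := by omega
                rw [e1, e2, fac_shift, fac_shift, fac_succ hbi, fac_succ hbj, hw, hlet]
          refine ⟨i + m, j - i, 0, by omega, by omega, by omega, Nat.zero_le _, ?_⟩
          intro s hs hcond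
          have ht : s = i + (s - i - m) + m := by omega
          set t := s - i - m with htdef
          have h1 : i + t + m < w.length := by omega
          have h2 : j + t + m < w.length := by omega
          have hwt := hwin t (le_of_lt h2)
          have hlet := hdet (i + t) (j + t) h1 h2 hwt
          have e1 : s = i + t + m := by omega
          have e2 : s + (j - i) = j + t + m := by omega
          rw [e2, e1, List.getElem?_eq_getElem h1, List.getElem?_eq_getElem h2, hlet]
        rcases Nat.lt_or_ge i j with hij | hij
        · exact hcore i j hij (by omega) heq
        · have : j < i := by omega
          exact hcore j i this (by omega) heq.symm
      · -- strip case
        push_neg at hext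
        obtain ⟨f, hf, hfna⟩ := hext
        have hm1 : 1 ≤ m := by
          by_contra hm0
          have hm0' : m = 0 := by omega
          subst hm0'
          have hfe : f = [] := by
            have h' := hf
            rw [facset_zero] at h'
            simpa using h'
          have h01 : (0:ℕ) + 0 < w.length := by omega
          have hstep : fac w 0 (0 + 1) = fac w 0 0 ++ [w[0 + 0]'h01] := fac_succ h01
          have hmem : fac w 0 (0 + 1) ∈ FacSet w (0 + 1) := mem_facset (by omega)
          rw [hstep] at hmem
          have hz : fac w 0 0 = [] := by simp [fac]
          rw [hz] at hmem
          apply hfna (w[0 + 0]'h01)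
          rw [hfe]
          simpa using hmem
        -- occurrences only at the end
        have hocc : ∀ s, s + m ≤ w.length → fac w s m = f → s + m = w.length := by
          intro s hs hfac
          by_contra hne
          have hlt : s + m < w.length := by omega
          apply hfna (w[s + m]'hlt)
          rw [← hfac, ← fac_succ hlt]
          exact mem_facset (by omega)
        set w' := w.take (w.length - 1) with hw'def
        have hlen' : w'.length = w.length - 1 := by
          simp [hw'def, List.length_take]
        have hfac' : ∀ s m', s + m' ≤ w'.length → fac w' s m' = fac w s m' := by
          intro s m' h
          rw [hlen'] at h
          simp only [fac, hw'def]
          rw [List.drop_take, List.take_take]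
          congr 1
          omega
        have hsub : ∀ m', FacSet w' m' ⊆ FacSet w m' := by
          intro m'
          rintro x ⟨s, hs, rfl⟩
          simp only [Set.mem_setOf_eq] at hs
          dsimp only
          rw [hfac' s m' hs]
          exact mem_facset (by rw [hlen'] at hs; omega)
        have hbud' : cplx w' k ≤ k :=
          le_trans (Set.ncard_le_ncard (hsub k) (facset_finite w k)) hbud
        have hnotmem : f ∉ FacSet w' m := by
          rintro ⟨s, hs, heqf⟩
          simp only [Set.mem_setOf_eq] at hs
          dsimp only at heqf
          rw [hfac' s m hs] at heqf
          have := hocc s (by rw [hlen'] at hs; omega) heqf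
          rw [hlen'] at hs
          omega
        have hphilt : Phi w' k < Phi w k := by
          apply Finset.sum_lt_sum
          · intro m' _
            exact Set.ncard_le_ncard (hsub m') (facset_finite w m')
          · refine ⟨m, Finset.mem_Icc.2 ⟨hm1, by omega⟩, ?_⟩
            calc cplx w' m ≤ (FacSet w m \ {f}).ncard := by
                  apply Set.ncard_le_ncard _ ((facset_finite w m).diff)
                  intro x hx
                  exact ⟨hsub m hx, by simp; rintro rfl; exact hnotmem hx⟩
              _ < cplx w m := Set.ncard_diff_singleton_lt_of_mem hf (facset_finite w m)
        obtain ⟨i₀, P, j₀, h1, h2, h3, h4, hper⟩ :=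
          IH (w.length - 1) (by omega) w' hlen' hbud'
        refine ⟨i₀, P, j₀ + 1, h1, h2, h3, by omega, ?_⟩
        intro s hs hcond
        have hc' : s + P + j₀ < w'.length := by omega
        have hper' := hper s hs hc'
        have e1 : w'[s]? = w[s]? := by
          simp only [hw'def, List.getElem?_take]
          rw [if_pos (by omega)]
        have e2 : w'[s + P]? = w[s + P]? := by
          simp only [hw'def, List.getElem?_take]
          rw [if_pos (by omega)]
        rw [← e1, ← e2, hper']

end FMH3


section LexLemmas

/-- appending on the right preserves strict lex inequality when lengths are equal -/
lemma lex_append_right {a b c d : List ℕ} (h : List.Lex (· < ·) a b) (hlen : a.length = b.length) :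
    List.Lex (· < ·) (a ++ c) (b ++ d) := by
  induction h with
  | nil => simp at hlen
  | @rel x xs y ys hxy => exact List.Lex.rel hxy
  | @cons x xs ys hxs ih =>
      simp only [List.length_cons, Nat.succ_inj] at hlen
      exact List.Lex.cons (ih hlen)

/-- appending on the left preserves strict lex inequality -/
lemma lex_append_left {c d : List ℕ} (a : List ℕ) (h : List.Lex (· < ·) c d) :
    List.Lex (· < ·) (a ++ c) (a ++ d) := by
  induction a with
  | nil => simpa using h
  | cons x xs ih => exact List.Lex.cons ih

lemma lt_append_right {a b c d : List ℕ} (h : a < b) (hlen : a.length = b.length) :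
    (a ++ c) < (b ++ d) := lex_append_right h hlen

lemma lt_append_left {c d : List ℕ} (a : List ℕ) (h : c < d) : (a ++ c) < (a ++ d) :=
  lex_append_left a h

end LexLemmas

section NF
variable {G : Type*} [Group G] {S : Set G}

/-- the geodesic words of g -/
def GW (S : Set G) (g : G) : Set (List G) :=
  {l : List G | IsWord S l ∧ l.prod = g ∧ l.length = wordLength S g}

lemma gw_finite (hSfin : S.Finite) (g : G) : (GW S g).Finite := by
  apply (finite_words hSfin (wordLength S g)).subset
  rintro l ⟨h1, _, h3⟩
  exact ⟨le_of_eq h3, h1⟩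

/-- a normal form assignment: a choice of lex-least geodesic word for each element -/
def IsNF (S : Set G) (φ : G → ℕ) (N : G → List G) : Prop :=
  ∀ g : G, N g ∈ GW S g ∧ ∀ l ∈ GW S g, List.map φ (N g) ≤ List.map φ l

lemma exists_nf (hSfin : S.Finite) (hSsym : ∀ s ∈ S, s⁻¹ ∈ S)
    (hSgen : Subgroup.closure S = ⊤) (φ : G → ℕ) :
    ∃ N : G → List G, IsNF S φ N := by
  have h : ∀ g : G, ∃ l, l ∈ GW S g ∧ ∀ l' ∈ GW S g, List.map φ l ≤ List.map φ l' := by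
    intro g
    have hne : (GW S g).Nonempty := by
      obtain ⟨l, h1, h2, h3⟩ := exists_geodesic hSsym hSgen g
      exact ⟨l, h1, h2, h3⟩
    obtain ⟨l, hl, hmin⟩ := Set.exists_min_image (GW S g) (fun l => List.map φ l)
      (gw_finite hSfin g) hne
    exact ⟨l, hl, hmin⟩
  choose N h1 h2 using h
  exact ⟨N, fun g => ⟨h1 g, h2 g⟩⟩

variable {φ : G → ℕ} {N : G → List G}

lemma nf_word (hN : IsNF S φ N) (g : G) : IsWord S (N g) := (hN g).1.1
lemma nf_prod (hN : IsNF S φ N) (g : G) : (N g).prod = g := (hN g).1.2.1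
lemma nf_length (hN : IsNF S φ N) (g : G) : (N g).length = wordLength S g := (hN g).1.2.2

/-- words over S with equal φ-images are equal -/
lemma word_eq_of_map_eq (hφ : Set.InjOn φ S) :
    ∀ {a b : List G}, IsWord S a → IsWord S b → List.map φ a = List.map φ b → a = b := by
  intro a
  induction a with
  | nil =>
      intro b _ _ h
      simp only [List.map_nil] at h
      exact (List.map_eq_nil_iff.mp h.symm).symm
  | cons x xs ih =>
      intro b ha hb h
      match b with
      | [] => simp at h
      | y :: ys =>
          simp only [List.map_cons, List.cons.injEq] at h
          have hx : x = y := hφ (ha x (by simp)) (hb y (by simp)) h.1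
          have : xs = ys := ih (fun z hz => ha z (by simp [hz]))
            (fun z hz => hb z (by simp [hz])) h.2
          rw [hx, this]

/-- splitting a geodesic: both halves are geodesic -/
lemma geodesic_split (hSsym : ∀ s ∈ S, s⁻¹ ∈ S) (hSgen : Subgroup.closure S = ⊤)
    {g : G} {u v : List G} (hu : IsWord S u) (hv : IsWord S v)
    (hp : (u ++ v).prod = g) (hlen : (u ++ v).length = wordLength S g) :
    wordLength S u.prod = u.length ∧ wordLength S v.prod = v.length := by
  have h1 : wordLength S u.prod ≤ u.length := wordLength_le _ hu rfl
  have h2 : wordLength S v.prod ≤ v.length := wordLength_le _ hv rfl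
  have h3 : wordLength S g ≤ wordLength S u.prod + wordLength S v.prod := by
    have : g = u.prod * v.prod := by rw [← hp, List.prod_append]
    rw [this]
    exact wordLength_mul_le hSsym hSgen _ _
  simp only [List.length_append] at hlen
  omega

/-- prefix closure of normal forms -/
lemma nf_prefix (hφ : Set.InjOn φ S) (hN : IsNF S φ N)
    (hSsym : ∀ s ∈ S, s⁻¹ ∈ S) (hSgen : Subgroup.closure S = ⊤)
    {g : G} {u v : List G} (hsplit : N g = u ++ v) : N u.prod = u := by
  have hword : IsWord S (u ++ v) := hsplit ▸ nf_word hN g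
  have hu : IsWord S u := fun z hz => hword z (by simp [hz])
  have hv : IsWord S v := fun z hz => hword z (by simp [hz])
  have hp : (u ++ v).prod = g := by rw [← hsplit]; exact nf_prod hN g
  have hlen : (u ++ v).length = wordLength S g := by rw [← hsplit]; exact nf_length hN g
  obtain ⟨hgu, hgv⟩ := geodesic_split hSsym hSgen hu hv hp hlen
  by_contra hne
  set u' := N u.prod with hu'
  have hu'w : IsWord S u' := nf_word hN _
  have hu'p : u'.prod = u.prod := nf_prod hN _
  have hu'len : u'.length = u.length := by rw [nf_length hN, hgu]
  -- u is a geodesic word for u.prod, so map φ u' ≤ map φ u, and ≠ so <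
  have hle : List.map φ u' ≤ List.map φ u := (hN u.prod).2 u ⟨hu, rfl, hgu.symm⟩
  have hmapne : List.map φ u' ≠ List.map φ u := by
    intro heq
    exact hne (word_eq_of_map_eq hφ hu'w hu heq)
  have hlt : List.map φ u' < List.map φ u := lt_of_le_of_ne hle hmapne
  -- then u' ++ v is a strictly smaller geodesic word for g
  have hmem : u' ++ v ∈ GW S g := by
    refine ⟨?_, ?_, ?_⟩
    · intro z hz
      rcases List.mem_append.1 hz with h | h
      · exact hu'w z h
      · exact hv z h
    · rw [List.prod_append, hu'p, ← List.prod_append, hp]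
    · simp only [List.length_append, hu'len]
      rw [← hlen]; simp
  have hmin : List.map φ (N g) ≤ List.map φ (u' ++ v) := (hN g).2 _ hmem
  have : List.map φ (u' ++ v) < List.map φ (u ++ v) := by
    rw [List.map_append, List.map_append]
    exact lt_append_right hlt (by simp [hu'len])
  rw [hsplit] at hmin
  exact absurd (lt_of_le_of_lt hmin this) (lt_irrefl _)

/-- suffix closure of normal forms -/
lemma nf_suffix (hφ : Set.InjOn φ S) (hN : IsNF S φ N)
    (hSsym : ∀ s ∈ S, s⁻¹ ∈ S) (hSgen : Subgroup.closure S = ⊤)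
    {g : G} {u v : List G} (hsplit : N g = u ++ v) : N v.prod = v := by
  have hword : IsWord S (u ++ v) := hsplit ▸ nf_word hN g
  have hu : IsWord S u := fun z hz => hword z (by simp [hz])
  have hv : IsWord S v := fun z hz => hword z (by simp [hz])
  have hp : (u ++ v).prod = g := by rw [← hsplit]; exact nf_prod hN g
  have hlen : (u ++ v).length = wordLength S g := by rw [← hsplit]; exact nf_length hN g
  obtain ⟨hgu, hgv⟩ := geodesic_split hSsym hSgen hu hv hp hlen
  by_contra hne
  set v' := N v.prod with hv'
  have hv'w : IsWord S v' := nf_word hN _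
  have hv'p : v'.prod = v.prod := nf_prod hN _
  have hv'len : v'.length = v.length := by rw [nf_length hN, hgv]
  have hle : List.map φ v' ≤ List.map φ v := (hN v.prod).2 v ⟨hv, rfl, hgv.symm⟩
  have hmapne : List.map φ v' ≠ List.map φ v := by
    intro heq
    exact hne (word_eq_of_map_eq hφ hv'w hv heq)
  have hlt : List.map φ v' < List.map φ v := lt_of_le_of_ne hle hmapne
  have hmem : u ++ v' ∈ GW S g := by
    refine ⟨?_, ?_, ?_⟩
    · intro z hz
      rcases List.mem_append.1 hz with h | h
      · exact hu z h
      · exact hv'w z h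
    · rw [List.prod_append, hv'p, ← List.prod_append, hp]
    · simp only [List.length_append, hv'len]
      rw [← hlen]; simp
  have hmin : List.map φ (N g) ≤ List.map φ (u ++ v') := (hN g).2 _ hmem
  have : List.map φ (u ++ v') < List.map φ (u ++ v) := by
    rw [List.map_append, List.map_append]
    exact lt_append_left _ hlt
  rw [hsplit] at hmin
  exact absurd (lt_of_le_of_lt hmin this) (lt_irrefl _)

/-- factors of normal forms are normal forms -/
lemma nf_factor (hφ : Set.InjOn φ S) (hN : IsNF S φ N)
    (hSsym : ∀ s ∈ S, s⁻¹ ∈ S) (hSgen : Subgroup.closure S = ⊤)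
    (g : G) (s m : ℕ) : N (((N g).drop s |>.take m).prod) = ((N g).drop s |>.take m) := by
  have h1 : N ((N g).drop s).prod = (N g).drop s :=
    nf_suffix hφ hN hSsym hSgen (g := g) (u := (N g).take s) (v := (N g).drop s)
      (by rw [List.take_append_drop])
  have h2 : N ((N g).drop s).prod = ((N g).drop s).take m ++ ((N g).drop s).drop m := by
    rw [h1]
    exact (List.take_append_drop _ _).symm
  have := nf_prefix hφ hN hSsym hSgen h2
  simpa using this

end NF


section Glue
variable {G : Type*} [Group G] {S : Set G}

def sph (S : Set G) (m : ℕ) : Set G := {g : G | wordLength S g = m}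
def ballN (S : Set G) (n : ℕ) : Set G := {g : G | wordLength S g ≤ n}
noncomputable def gam (S : Set G) (n : ℕ) : ℕ := (ballN S n).ncard

variable (hSfin : S.Finite) (hSsym : ∀ s ∈ S, s⁻¹ ∈ S) (hSgen : Subgroup.closure S = ⊤)
include hSfin hSsym hSgen

omit hSfin hSsym hSgen in
lemma sph_subset_ball (m : ℕ) : sph S m ⊆ ballN S m := fun g hg => le_of_eq hg

lemma sph_finite (m : ℕ) : (sph S m).Finite :=
  (finite_ball hSfin hSsym hSgen m).subset (sph_subset_ball m)

lemma ballN_finite (n : ℕ) : (ballN S n).Finite := finite_ball hSfin hSsym hSgen n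

lemma gam_zero : gam S 0 = 1 := by
  have : ballN S 0 = {(1 : G)} := by
    ext g
    simp only [ballN, Set.mem_setOf_eq, Nat.le_zero, Set.mem_singleton_iff]
    constructor
    · exact fun h => wordLength_eq_zero hSsym hSgen h
    · rintro rfl; exact wordLength_one
  rw [gam, this, Set.ncard_singleton]

lemma gam_succ (n : ℕ) : gam S (n + 1) = gam S n + (sph S (n + 1)).ncard := by
  have hU : ballN S (n + 1) = ballN S n ∪ sph S (n + 1) := by
    ext g
    simp only [ballN, sph, Set.mem_setOf_eq, Set.mem_union]
    omega
  have hdisj : Disjoint (ballN S n) (sph S (n + 1)) := by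
    rw [Set.disjoint_iff]
    rintro g ⟨h1, h2⟩
    simp only [ballN, sph, Set.mem_setOf_eq] at h1 h2
    omega
  rw [gam, hU, Set.ncard_union_eq hdisj (ballN_finite hSfin hSsym hSgen n)
    (sph_finite hSfin hSsym hSgen (n + 1))]
  rfl

lemma gam_mono {a b : ℕ} (h : a ≤ b) : gam S a ≤ gam S b := by
  apply Set.ncard_le_ncard _ (ballN_finite hSfin hSsym hSgen b)
  intro g hg
  exact le_trans hg h

omit hSfin hSsym hSgen in
lemma wordBall_natCast (n : ℕ) : wordBall S (n : ℝ) = ballN S n := by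
  ext g
  simp only [wordBall, ballN, Set.mem_setOf_eq, Nat.cast_le]

/-- Case A: all spheres big implies quadratic growth -/
lemma caseA_bound (hbig : ∀ m, 1 ≤ m → m + 1 ≤ (sph S m).ncard) :
    ∀ n, n ^ 2 ≤ 2 * gam S n := by
  intro n
  induction n with
  | zero => simp
  | succ n ih =>
      have h1 := gam_succ hSfin hSsym hSgen (S := S) n
      have h2 := hbig (n + 1) (by omega)
      have : (n + 1) ^ 2 = n ^ 2 + 2 * n + 1 := by ring
      omega

/-- Case B: linear upper bound on balls eventually, given bounded spheres -/
lemma caseB_gamma {C N₀ : ℕ} (hC : ∀ n, N₀ ≤ n → (sph S n).ncard ≤ C) :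
    ∀ t, gam S (N₀ + t) ≤ gam S N₀ + C * t := by
  intro t
  induction t with
  | zero => simp
  | succ t ih =>
      have h1 : gam S (N₀ + (t + 1)) = gam S (N₀ + t) + (sph S (N₀ + t + 1)).ncard := by
        have h := gam_succ hSfin hSsym hSgen (S := S) (N₀ + t)
        have he : N₀ + (t + 1) = N₀ + t + 1 := by omega
        rw [he, h]
      have h2 := hC (N₀ + t + 1) (by omega)
      calc gam S (N₀ + (t + 1)) ≤ gam S N₀ + C * t + C := by omega
        _ = gam S N₀ + C * (t + 1) := by ring

/-- Case B contradiction with superlinear growth -/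
lemma caseB_contra {C N₀ : ℕ} (hC : ∀ n, N₀ ≤ n → (sph S n).ncard ≤ C)
    (hgrowth : Tendsto (fun n : ℕ => (((wordBall S n).ncard : ℝ) / (n : ℝ))) atTop atTop) :
    False := by
  have hlin := caseB_gamma hSfin hSsym hSgen hC
  have hbound : ∀ n : ℕ, 1 ≤ n → ((wordBall S n).ncard : ℝ) / (n : ℝ) ≤ (gam S N₀ + C : ℝ) := by
    intro n hn
    rw [wordBall_natCast]
    rcases le_or_gt N₀ n with h | h
    · have h1 : gam S n ≤ gam S N₀ + C * n := by
        have := hlin (n - N₀)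
        have he : N₀ + (n - N₀) = n := by omega
        rw [he] at this
        have : gam S n ≤ gam S N₀ + C * (n - N₀) := this
        have hle : C * (n - N₀) ≤ C * n := Nat.mul_le_mul_left _ (by omega)
        omega
      rw [div_le_iff₀ (by positivity)]
      calc (gam S n : ℝ) ≤ (gam S N₀ : ℝ) + C * n := by exact_mod_cast h1
        _ ≤ (gam S N₀) * n + C * n := by
            have h1 : (1:ℝ) ≤ (n:ℝ) := by exact_mod_cast hn
            have h2 : (0:ℝ) ≤ (gam S N₀ : ℝ) := Nat.cast_nonneg _
            nlinarith
        _ = (gam S N₀ + C : ℝ) * n := by ring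
    · have h1 : gam S n ≤ gam S N₀ := gam_mono hSfin hSsym hSgen (by omega)
      rw [div_le_iff₀ (by positivity)]
      calc (gam S n : ℝ) ≤ (gam S N₀ : ℝ) := by exact_mod_cast h1
        _ ≤ (gam S N₀ + C : ℝ) * 1 := by
            have h2 : (0:ℝ) ≤ (C : ℝ) := Nat.cast_nonneg _
            push_cast
            nlinarith
        _ ≤ (gam S N₀ + C : ℝ) * n := by
            apply mul_le_mul_of_nonneg_left _ (by positivity)
            exact_mod_cast hn
  have hev := (tendsto_atTop.1 hgrowth) ((gam S N₀ + C : ℝ) + 1)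
  rw [eventually_atTop] at hev
  obtain ⟨M, hM⟩ := hev
  have := hM (max M 1) (le_max_left _ _)
  have hb := hbound (max M 1) (le_max_right _ _)
  linarith

end Glue


section P6
variable {G : Type*} [Group G] {S : Set G}

/-- factors of normal words are normal (restated for `fac`) -/
lemma fac_nf {φ : G → ℕ} {N : G → List G} (hφ : Set.InjOn φ S) (hN : IsNF S φ N)
    (hSsym : ∀ s ∈ S, s⁻¹ ∈ S) (hSgen : Subgroup.closure S = ⊤)
    (g : G) (s m : ℕ) : N ((fac (N g) s m).prod) = fac (N g) s m :=
  nf_factor hφ hN hSsym hSgen g s m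

/-- The budget: factor sets of normal words inject into spheres. -/
lemma budget {φ : G → ℕ} {N : G → List G} (hφ : Set.InjOn φ S) (hN : IsNF S φ N)
    (hSfin : S.Finite) (hSsym : ∀ s ∈ S, s⁻¹ ∈ S) (hSgen : Subgroup.closure S = ⊤)
    (g : G) (m : ℕ) : cplx (N g) m ≤ (sph S m).ncard := by
  refine Set.ncard_le_ncard_of_injOn List.prod ?_ ?_ (sph_finite hSfin hSsym hSgen m)
  · rintro f ⟨s, hs, rfl⟩
    simp only [Set.mem_setOf_eq] at hs
    dsimp only
    have hnf := fac_nf hφ hN hSsym hSgen g s m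
    have hlen : (fac (N g) s m).length = m := length_fac hs
    show wordLength S (fac (N g) s m).prod = m
    have h1 : (N ((fac (N g) s m).prod)).length = wordLength S ((fac (N g) s m).prod) :=
      nf_length hN _
    rw [hnf, hlen] at h1
    exact h1.symm
  · rintro f ⟨s, hs, rfl⟩ f' ⟨s', hs', rfl⟩ hprod
    dsimp only at hprod ⊢
    have h1 := fac_nf hφ hN hSsym hSgen g s m
    have h2 := fac_nf hφ hN hSsym hSgen g s' m
    rw [← h1, ← h2, hprod]

/-- Case B: if some sphere is small, all large spheres are bounded. -/
lemma caseB_sphere_bound {φ : G → ℕ} {N : G → List G} (hφ : Set.InjOn φ S) (hN : IsNF S φ N)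
    (hSfin : S.Finite) (hSsym : ∀ s ∈ S, s⁻¹ ∈ S) (hSgen : Subgroup.closure S = ⊤)
    (k : ℕ) (hk : 1 ≤ k) (hsmall : (sph S k).ncard ≤ k) :
    ∃ C N₀ : ℕ, ∀ n, N₀ ≤ n → (sph S n).ncard ≤ C := by
  set D1 := 3 * k with hD1
  set D2 := 2 * k with hD2
  set D3 := 2 * k * k with hD3
  set N₀ := D1 + D2 + D3 + 1 with hN₀
  set T : Set (ℕ × ℕ × ℕ × List G × List G) :=
    (Set.Iic D1) ×ˢ (Set.Iic D2) ×ˢ (Set.Iic D3) ×ˢ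
      ({l : List G | l.length ≤ D1 + D2 ∧ IsWord S l}) ×ˢ
      ({l : List G | l.length ≤ D3 ∧ IsWord S l}) with hT
  have hTfin : T.Finite :=
    (Set.finite_Iic _).prod ((Set.finite_Iic _).prod ((Set.finite_Iic _).prod
      ((finite_words hSfin _).prod (finite_words hSfin _))))
  refine ⟨T.ncard, N₀, fun n hn => ?_⟩
  -- choose FMH data for each element of the sphere
  have hdata : ∀ g : G, ∃ d : ℕ × ℕ × ℕ, wordLength S g = n →
      (d.1 ≤ D1 ∧ 1 ≤ d.2.1 ∧ d.2.1 ≤ D2 ∧ d.2.2 ≤ D3 ∧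
        ∀ s, d.1 ≤ s → s + d.2.1 + d.2.2 < n → (N g)[s]? = (N g)[s + d.2.1]?) := by
    intro g
    by_cases hg : wordLength S g = n
    · have hwlen : (N g).length = n := by rw [nf_length hN, hg]
      have hbud : cplx (N g) k ≤ k :=
        le_trans (budget hφ hN hSfin hSsym hSgen g k) hsmall
      obtain ⟨i₀, P, j₀, h1, h2, h3, h4, hper⟩ := fmh_main k hk (N g).length (N g) rfl hbud
      refine ⟨(i₀, P, j₀), fun _ => ⟨h1, h2, h3, ?_, ?_⟩⟩
      · exact le_trans h4 (phi_le_of_budget hbud)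
      · intro s hs hcond
        exact hper s hs (by rw [hwlen]; exact hcond)
    · exact ⟨(0, 0, 0), fun h => absurd h hg⟩
  choose d hd using hdata
  set E : G → ℕ × ℕ × ℕ × List G × List G := fun g =>
    ((d g).1, (d g).2.1, (d g).2.2, (N g).take ((d g).1 + (d g).2.1),
      (N g).drop (n - (d g).2.2)) with hE
  refine Set.ncard_le_ncard_of_injOn E ?_ ?_ hTfin
  · -- maps into T
    intro g hg
    have hg' : wordLength S g = n := hg
    obtain ⟨h1, h2, h3, h4, hper⟩ := hd g hg'
    have hword := nf_word hN g
    refine ⟨h1, h3, h4, ⟨?_, ?_⟩, ⟨?_, ?_⟩⟩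
    · simp only [hE, List.length_take]
      omega
    · intro z hz
      exact hword z (List.take_subset _ _ hz)
    · simp only [hE, List.length_drop]
      have : (N g).length = n := by rw [nf_length hN, hg']
      omega
    · intro z hz
      exact hword z (List.drop_subset _ _ hz)
  · -- injective on the sphere
    intro g hg g' hg' hEq
    have hgn : wordLength S g = n := hg
    have hgn' : wordLength S g' = n := hg'
    obtain ⟨ha1, hp1, hp2, hj1, hper⟩ := hd g hgn
    obtain ⟨ha1', hp1', hp2', hj1', hper'⟩ := hd g' hgn'
    simp only [hE, Prod.mk.injEq] at hEq
    obtain ⟨e1, e2, e3, e4, e5⟩ := hEq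
    set a := (d g).1 with hadef
    set p := (d g).2.1 with hpdef
    set j := (d g).2.2 with hjdef
    have hlw : (N g).length = n := by rw [nf_length hN, hgn]
    have hlw' : (N g').length = n := by rw [nf_length hN, hgn']
    -- all positions agree
    have key : ∀ t : ℕ, (N g)[t]? = (N g')[t]? := by
      intro t
      induction t using Nat.strong_induction_on with
      | _ t IH =>
        rcases lt_or_ge t (a + p) with hc | hc
        · have q1 : (N g)[t]? = ((N g).take (a + p))[t]? := by
            rw [List.getElem?_take, if_pos hc]
          have q2 : (N g')[t]? = ((N g').take (a + p))[t]? := by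
            rw [List.getElem?_take, if_pos hc]
          rw [q1, q2, e4]
          rw [← e1, ← e2]
        · rcases lt_or_ge t (n - j) with hc2 | hc2
          · have hs : a ≤ t - p := by omega
            have hcond : (t - p) + p + j < n := by omega
            have hq := hper (t - p) hs hcond
            have hq' : (N g')[t - p]? = (N g')[t - p + p]? := by
              have := hper' (t - p) (by rw [← e1]; exact hs)
                (by rw [← e2, ← e3]; exact hcond)
              rw [← e2] at this
              exact this
            have he : t - p + p = t := by omega
            rw [he] at hq hq'
            rw [← hq, ← hq']
            exact IH (t - p) (by omega)
          · have q1 : (N g)[t]? = ((N g).drop (n - j))[t - (n - j)]? := by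
              rw [List.getElem?_drop]
              congr 1
              omega
            have q2 : (N g')[t]? = ((N g').drop (n - j))[t - (n - j)]? := by
              rw [List.getElem?_drop]
              congr 1
              omega
            rw [q1, q2, e5]
            rw [← e3]
    have hNeq : N g = N g' := List.ext_getElem? key
    have := nf_prod hN g
    rw [hNeq, nf_prod hN g'] at this
    exact this.symm

end P6


theorem stmt11 {G : Type*} [Group G] (S : Set G) (hSfin : S.Finite)
    (hSsym : ∀ s ∈ S, s⁻¹ ∈ S) (hSgen : Subgroup.closure S = ⊤)
    -- super-linear growth: |B_G(n)|/n → ∞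
    (hgrowth : Tendsto (fun n : ℕ => (((wordBall S n).ncard : ℝ) / (n : ℝ))) atTop atTop) :
    -- growth is at least quadratic
    ∃ c : ℝ, 0 < c ∧ ∀ r : ℝ, 1 ≤ r → c * r ^ 2 ≤ ((wordBall S r).ncard : ℝ) := by
  classical
  haveI : Fintype ↥S := hSfin.fintype
  set φ : G → ℕ := fun g => if h : g ∈ S then ((Fintype.equivFin ↥S) ⟨g, h⟩ : ℕ) else 0
    with hφdef
  have hφ : Set.InjOn φ S := by
    intro a ha b hb hab
    simp only [hφdef, dif_pos ha, dif_pos hb] at hab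
    have h1 : (Fintype.equivFin ↥S) ⟨a, ha⟩ = (Fintype.equivFin ↥S) ⟨b, hb⟩ :=
      Fin.val_injective hab
    have h2 := (Fintype.equivFin ↥S).injective h1
    exact congrArg Subtype.val h2
  obtain ⟨N, hN⟩ := exists_nf hSfin hSsym hSgen φ
  by_cases hbig : ∀ m : ℕ, 1 ≤ m → m + 1 ≤ (sph S m).ncard
  · -- quadratic lower bound
    have hquad := caseA_bound hSfin hSsym hSgen hbig
    refine ⟨1/8, by norm_num, ?_⟩
    intro r hr
    set n := ⌊r⌋₊ with hndef
    have hr0 : (0:ℝ) ≤ r := by linarith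
    have hn1 : 1 ≤ n := Nat.le_floor (by exact_mod_cast hr)
    have hsub : ballN S n ⊆ wordBall S r := by
      intro g hg
      have h1 : (wordLength S g : ℝ) ≤ (n : ℝ) := by exact_mod_cast hg
      exact le_trans h1 (Nat.floor_le hr0)
    have hmono : gam S n ≤ (wordBall S r).ncard :=
      Set.ncard_le_ncard hsub (finite_wordBall hSfin hSsym hSgen r)
    have h2 : ((n : ℝ)) ^ 2 ≤ 2 * (gam S n : ℝ) := by exact_mod_cast hquad n
    have h3 : r < (n : ℝ) + 1 := Nat.lt_floor_add_one r
    have h4 : (1 : ℝ) ≤ (n : ℝ) := by exact_mod_cast hn1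
    have h5 : (gam S n : ℝ) ≤ ((wordBall S r).ncard : ℝ) := by exact_mod_cast hmono
    nlinarith
  · -- small sphere: contradiction with superlinear growth
    push_neg at hbig
    obtain ⟨k, hk1, hklt⟩ := hbig
    have hksmall : (sph S k).ncard ≤ k := by omega
    obtain ⟨C, N₀, hC⟩ := caseB_sphere_bound hφ hN hSfin hSsym hSgen k hk1 hksmall
    exact (caseB_contra hSfin hSsym hSgen hC hgrowth).elim
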